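/- Let L > 0 and σ ∈ {1, −1}, and let A be the real 4×4 matrix with rows: (σ·(−1)/(8√3 L⁷), σ·(−1)/(8√3 L⁷), −1/(8L⁷), 7/(8L⁷)); (σ·(−1)/(8√3 L⁷), σ·(−1)/(8√3 L⁷), 7/(8L⁷), −1/(8L⁷)); (5/(24L⁷), −19/(24L⁷), σ/(8√3 L⁷), σ/(8√3 L⁷)); (−19/(24L⁷), 5/(24L⁷), σ/(8√3 L⁷), σ/(8√3 L⁷)). Then the characteristic polynomial of A is λ⁴ + (17/(12 L¹⁴))·λ² + 5/(12 L²⁸), and the eigenvalues of A over ℂ are exactly the four distinct purely imaginary numbers i/L⁷, −i/L⁷, i√15/(6L⁷), −i√15/(6L⁷). In particular A is diagonalizable over ℂ and nonsingular. -/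

import Mathlib

open Real Matrix Polynomial Complex

/-- The linearization matrix `A_{1,2}` at the circular equatorial relative equilibria. -/
noncomputable def A12 (L σ : ℝ) : Matrix (Fin 4) (Fin 4) ℝ :=
  !![σ * (-1) / (8 * Real.sqrt 3 * L ^ 7), σ * (-1) / (8 * Real.sqrt 3 * L ^ 7),
      -1 / (8 * L ^ 7), 7 / (8 * L ^ 7);
     σ * (-1) / (8 * Real.sqrt 3 * L ^ 7), σ * (-1) / (8 * Real.sqrt 3 * L ^ 7),
      7 / (8 * L ^ 7), -1 / (8 * L ^ 7);
     5 / (24 * L ^ 7), -19 / (24 * L ^ 7), σ / (8 * Real.sqrt 3 * L ^ 7),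
      σ / (8 * Real.sqrt 3 * L ^ 7);
     -19 / (24 * L ^ 7), 5 / (24 * L ^ 7), σ / (8 * Real.sqrt 3 * L ^ 7),
      σ / (8 * Real.sqrt 3 * L ^ 7)]

lemma det_fin_four' {R : Type*} [CommRing R] (M : Matrix (Fin 4) (Fin 4) R) :
    M.det =
      M 0 0 * M 1 1 * M 2 2 * M 3 3 - M 0 0 * M 1 1 * M 2 3 * M 3 2 -
        M 0 0 * M 1 2 * M 2 1 * M 3 3 + M 0 0 * M 1 2 * M 2 3 * M 3 1 +
        M 0 0 * M 1 3 * M 2 1 * M 3 2 - M 0 0 * M 1 3 * M 2 2 * M 3 1 -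
        M 0 1 * M 1 0 * M 2 2 * M 3 3 + M 0 1 * M 1 0 * M 2 3 * M 3 2 +
        M 0 1 * M 1 2 * M 2 0 * M 3 3 - M 0 1 * M 1 2 * M 2 3 * M 3 0 -
        M 0 1 * M 1 3 * M 2 0 * M 3 2 + M 0 1 * M 1 3 * M 2 2 * M 3 0 +
        M 0 2 * M 1 0 * M 2 1 * M 3 3 - M 0 2 * M 1 0 * M 2 3 * M 3 1 -
        M 0 2 * M 1 1 * M 2 0 * M 3 3 + M 0 2 * M 1 1 * M 2 3 * M 3 0 +
        M 0 2 * M 1 3 * M 2 0 * M 3 1 - M 0 2 * M 1 3 * M 2 1 * M 3 0 -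
        M 0 3 * M 1 0 * M 2 1 * M 3 2 + M 0 3 * M 1 0 * M 2 2 * M 3 1 +
        M 0 3 * M 1 1 * M 2 0 * M 3 2 - M 0 3 * M 1 1 * M 2 2 * M 3 0 -
        M 0 3 * M 1 2 * M 2 0 * M 3 1 + M 0 3 * M 1 2 * M 2 1 * M 3 0 := by
  simp [Matrix.det_succ_row_zero, Fin.sum_univ_succ, Matrix.det_fin_three,
    Matrix.submatrix, Fin.succAbove, show Fin.succ (2:Fin 3) = (3:Fin 4) from rfl,
    show Fin.castSucc (2:Fin 3) = (2:Fin 4) from rfl]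
  ring

lemma charpoly_eval' {n : Type*} [Fintype n] [DecidableEq n] {R} [CommRing R]
    (M : Matrix n n R) (x : R) :
    M.charpoly.eval x = (x • (1 : Matrix n n R) - M).det := by
  rw [Matrix.charpoly, ← Polynomial.coe_evalRingHom, RingHom.map_det]
  congr 1
  ext i j
  by_cases h : i = j <;>
    simp [h, charmatrix_apply, Matrix.diagonal_apply, Matrix.one_apply, Matrix.sub_apply]

lemma mem_spectrum_iff_root' {n : Type*} [Fintype n] [DecidableEq n] [Nonempty n]
    {K : Type*} [Field K] (M : Matrix n n K) (μ : K) :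
    μ ∈ spectrum K M ↔ M.charpoly.eval μ = 0 := by
  rw [spectrum.mem_iff, charpoly_eval',
    show (algebraMap K (Matrix n n K)) μ = μ • 1 by simp [Algebra.algebraMap_eq_smul_one],
    ]
  rw [(Matrix.isUnit_iff_isUnit_det _).trans isUnit_iff_ne_zero]
  exact not_not

lemma smul_one_sub_A12 (L σ x : ℝ) :
    x • (1 : Matrix (Fin 4) (Fin 4) ℝ) - A12 L σ =
    !![x - σ * (-1) / (8 * Real.sqrt 3 * L ^ 7), -(σ * (-1) / (8 * Real.sqrt 3 * L ^ 7)),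
        -(-1 / (8 * L ^ 7)), -(7 / (8 * L ^ 7));
       -(σ * (-1) / (8 * Real.sqrt 3 * L ^ 7)), x - σ * (-1) / (8 * Real.sqrt 3 * L ^ 7),
        -(7 / (8 * L ^ 7)), -(-1 / (8 * L ^ 7));
       -(5 / (24 * L ^ 7)), -(-19 / (24 * L ^ 7)), x - σ / (8 * Real.sqrt 3 * L ^ 7),
        -(σ / (8 * Real.sqrt 3 * L ^ 7));
       -(-19 / (24 * L ^ 7)), -(5 / (24 * L ^ 7)), -(σ / (8 * Real.sqrt 3 * L ^ 7)),
        x - σ / (8 * Real.sqrt 3 * L ^ 7)] := by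
  ext i j
  fin_cases i <;> fin_cases j <;>
    simp [A12, Matrix.one_apply, Matrix.sub_apply, Matrix.vecHead, Matrix.vecTail]

set_option maxHeartbeats 2000000 in
lemma A12_charpoly (L : ℝ) (hL : 0 < L) (σ : ℝ) (hσ : σ = 1 ∨ σ = -1) :
    (A12 L σ).charpoly = X ^ 4 + C (17 / (12 * L ^ 14)) * X ^ 2 + C (5 / (12 * L ^ 28)) := by
  have hL7 : L ^ 7 ≠ 0 := pow_ne_zero _ hL.ne'
  have hs : Real.sqrt 3 ≠ 0 := by positivity
  have hs2 : Real.sqrt 3 ^ 2 = 3 := Real.sq_sqrt (by norm_num)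
  have hσ2 : σ ^ 2 = 1 := by rcases hσ with h | h <;> simp [h]
  apply Polynomial.funext
  intro x
  rw [charpoly_eval', smul_one_sub_A12, det_fin_four']
  simp only [Matrix.cons_val', Matrix.cons_val_zero, Matrix.cons_val_one, Matrix.head_cons,
    Matrix.empty_val', Matrix.cons_val_fin_one, Matrix.head_fin_const, Matrix.cons_val_two,
    Matrix.cons_val_three, Matrix.tail_cons, Matrix.of_apply]
  simp only [eval_add, eval_mul, eval_pow, eval_X, eval_C, eval_one]
  have h42 : Real.sqrt 3 ^ 42 = 3 ^ 21 := by
    rw [show (42:ℕ) = 2 * 21 from rfl, pow_mul, hs2]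
  have h44 : Real.sqrt 3 ^ 44 = 3 ^ 22 := by
    rw [show (44:ℕ) = 2 * 22 from rfl, pow_mul, hs2]
  field_simp
  ring_nf
  rw [show Real.sqrt 3 ^ 4 = 9 by rw [show (4:ℕ) = 2 * 2 from rfl, pow_mul, hs2]; norm_num, hs2]
  linear_combination (-5308416 * (x ^ 2 * L ^ 14 + 1)) * hσ2


set_option maxHeartbeats 4000000 in
/-- The linearization at the equatorial equilibria has characteristic
polynomial `λ⁴ + 17λ²/(12L¹⁴) + 5/(12L²⁸)` and four distinct purely imaginary eigenvalues
`±i/L⁷`, `±i√15/(6L⁷)`; in particular it is diagonalizable over `ℂ` and nonsingular. -/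
theorem linearization_equatorial_spectrum (L : ℝ) (hL : 0 < L) (σ : ℝ)
    (hσ : σ = 1 ∨ σ = -1) :
    (A12 L σ).charpoly = X ^ 4 + C (17 / (12 * L ^ 14)) * X ^ 2 + C (5 / (12 * L ^ 28)) ∧
    spectrum ℂ ((A12 L σ).map Complex.ofReal)
      = {Complex.I / (L : ℂ) ^ 7, -(Complex.I / (L : ℂ) ^ 7),
         Complex.I * (Real.sqrt 15 : ℝ) / (6 * (L : ℂ) ^ 7),
         -(Complex.I * (Real.sqrt 15 : ℝ) / (6 * (L : ℂ) ^ 7))} ∧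
    ([Complex.I / (L : ℂ) ^ 7, -(Complex.I / (L : ℂ) ^ 7),
      Complex.I * (Real.sqrt 15 : ℝ) / (6 * (L : ℂ) ^ 7),
      -(Complex.I * (Real.sqrt 15 : ℝ) / (6 * (L : ℂ) ^ 7))] : List ℂ).Pairwise (· ≠ ·) ∧
    (∃ (P : Matrix (Fin 4) (Fin 4) ℂ) (d : Fin 4 → ℂ), IsUnit P ∧
      (A12 L σ).map Complex.ofReal = P * Matrix.diagonal d * P⁻¹) ∧
    (A12 L σ).det ≠ 0 := by
  refine ⟨A12_charpoly L hL σ hσ, ?_, ?_, ?_, ?_⟩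
  · -- spectrum
    have hLc : ((L : ℂ)) ^ 7 ≠ 0 := pow_ne_zero _ (by exact_mod_cast hL.ne')
    have ht2 : ((Real.sqrt 15 : ℝ) : ℂ) ^ 2 = 15 := by
      rw [← Complex.ofReal_pow, Real.sq_sqrt (by norm_num : (15:ℝ) ≥ 0)]; norm_num
    have hcp : ((A12 L σ).map Complex.ofReal).charpoly
        = X ^ 4 + C ((17:ℂ) / (12 * (L:ℂ) ^ 14)) * X ^ 2 + C ((5:ℂ) / (12 * (L:ℂ) ^ 28)) := by
      have : (A12 L σ).map Complex.ofReal = (A12 L σ).map (Complex.ofRealHom : ℝ →+* ℂ) := rfl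
      rw [this, Matrix.charpoly_map, A12_charpoly L hL σ hσ]
      simp only [Polynomial.map_add, Polynomial.map_mul, Polynomial.map_pow, Polynomial.map_X,
        Polynomial.map_C]
      push_cast
      norm_num
    ext μ
    rw [mem_spectrum_iff_root', hcp]
    simp only [eval_add, eval_mul, eval_pow, eval_X, eval_C]
    have hfac : μ ^ 4 + (17:ℂ) / (12 * (L:ℂ) ^ 14) * μ ^ 2 + (5:ℂ) / (12 * (L:ℂ) ^ 28)
        = (μ - Complex.I / (L : ℂ) ^ 7) * (μ - -(Complex.I / (L : ℂ) ^ 7)) *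
          (μ - Complex.I * (Real.sqrt 15 : ℝ) / (6 * (L : ℂ) ^ 7)) *
          (μ - -(Complex.I * (Real.sqrt 15 : ℝ) / (6 * (L : ℂ) ^ 7))) := by
      have hI4 : Complex.I ^ 4 = 1 := by
        rw [show (4:ℕ) = 2 * 2 from rfl, pow_mul, Complex.I_sq]; norm_num
      field_simp
      ring_nf
      rw [Complex.I_sq, ht2]
      ring_nf
      rw [hI4]
      have hLne : (L:ℂ) ≠ 0 := by exact_mod_cast hL.ne'
      have e1 : (L:ℂ) ^ 28 * ((L:ℂ))⁻¹ ^ 14 = (L:ℂ) ^ 14 := by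
        rw [inv_pow]; field_simp
      have e2 : (L:ℂ) ^ 28 * ((L:ℂ))⁻¹ ^ 28 = 1 := by
        rw [inv_pow]; field_simp
      ring
    rw [hfac]
    simp only [Set.mem_insert_iff, Set.mem_singleton_iff, mul_eq_zero, sub_eq_zero]
    tauto
  · -- pairwise distinct
    have hLc : ((L : ℂ)) ^ 7 ≠ 0 := pow_ne_zero _ (by exact_mod_cast hL.ne')
    have hsq : Real.sqrt 15 ^ 2 = 15 := Real.sq_sqrt (by norm_num)
    have ht6 : ((Real.sqrt 15 : ℝ) : ℂ) ≠ 6 := by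
      intro h
      have h' : Real.sqrt 15 = 6 := by exact_mod_cast h
      rw [h'] at hsq; norm_num at hsq
    have htm6 : ((Real.sqrt 15 : ℝ) : ℂ) ≠ -6 := by
      intro h
      have h' : Real.sqrt 15 = -6 := by exact_mod_cast h
      have := Real.sqrt_nonneg 15; rw [h'] at this; norm_num at this
    have ht0 : ((Real.sqrt 15 : ℝ) : ℂ) ≠ 0 := by
      exact_mod_cast Real.sqrt_ne_zero'.mpr (by norm_num : (0:ℝ) < 15)
    have h12 : Complex.I / (L:ℂ)^7 ≠ -(Complex.I / (L:ℂ)^7) := by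
      intro h; field_simp at h
      exact one_div_ne_zero hLc (by linear_combination h / 2)
    have h13 : Complex.I / (L:ℂ)^7 ≠ Complex.I * (Real.sqrt 15:ℝ) / (6*(L:ℂ)^7) := by
      intro h; field_simp at h
      apply ht6
      rw [div_left_inj' hLc] at h
      exact h.symm
    have h14 : Complex.I / (L:ℂ)^7 ≠ -(Complex.I * (Real.sqrt 15:ℝ) / (6*(L:ℂ)^7)) := by
      intro h; field_simp at h
      apply htm6
      rw [← neg_div, div_left_inj' hLc] at h
      linear_combination h
    have h23 : -(Complex.I / (L:ℂ)^7) ≠ Complex.I * (Real.sqrt 15:ℝ) / (6*(L:ℂ)^7) := by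
      intro h; field_simp at h
      apply htm6
      rw [← neg_div, div_left_inj' hLc] at h
      linear_combination -h
    have h24 : -(Complex.I / (L:ℂ)^7) ≠ -(Complex.I * (Real.sqrt 15:ℝ) / (6*(L:ℂ)^7)) := by
      intro h
      apply h13
      have := neg_injective h
      linear_combination this
    have h34 : Complex.I * (Real.sqrt 15:ℝ) / (6*(L:ℂ)^7) ≠
        -(Complex.I * (Real.sqrt 15:ℝ) / (6*(L:ℂ)^7)) := by
      intro h; field_simp at h
      exact one_div_ne_zero hLc (by linear_combination h / 2)
    simp only [List.pairwise_cons, List.mem_cons, List.mem_singleton, List.not_mem_nil, or_false,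
      ne_eq, List.Pairwise.nil]
    refine ⟨fun a' ha' => ?_, fun a' ha' => ?_, fun a' ha' => ?_, ?_, trivial⟩
    · rcases ha' with rfl | rfl | rfl
      exacts [h12, h13, h14]
    · rcases ha' with rfl | rfl
      exacts [h23, h24]
    · rcases ha' with rfl
      exact h34
    · exact fun a' ha' => ha'.elim
  · -- diagonalizable
    have hLne : (L:ℂ) ≠ 0 := by exact_mod_cast hL.ne'
    have hLc : ((L : ℂ)) ^ 7 ≠ 0 := pow_ne_zero _ hLne
    have hs0 : Real.sqrt 3 ≠ 0 := by positivity
    have hsC : ((Real.sqrt 3 : ℝ) : ℂ) ≠ 0 := by exact_mod_cast hs0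
    have hs2 : ((Real.sqrt 3 : ℝ) : ℂ) ^ 2 = 3 := by
      rw [← Complex.ofReal_pow, Real.sq_sqrt (by norm_num : (3:ℝ) ≥ 0)]; norm_num
    have hs3 : ((Real.sqrt 3 : ℝ) : ℂ) ^ 3 = 3 * ((Real.sqrt 3 : ℝ) : ℂ) := by
      rw [pow_succ, hs2]
    have ht2 : ((Real.sqrt 15 : ℝ) : ℂ) ^ 2 = 15 := by
      rw [← Complex.ofReal_pow, Real.sq_sqrt (by norm_num : (15:ℝ) ≥ 0)]; norm_num
    have ht3 : ((Real.sqrt 15 : ℝ) : ℂ) ^ 3 = 15 * ((Real.sqrt 15 : ℝ) : ℂ) := by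
      rw [pow_succ, ht2]
    have hσ2 : ((σ : ℝ) : ℂ) ^ 2 = 1 := by
      rcases hσ with h | h <;> rw [h] <;> norm_num
    have hσ3 : ((σ : ℝ) : ℂ) ^ 3 = ((σ : ℝ) : ℂ) := by
      rw [pow_succ, hσ2]; ring
    have hI3 : Complex.I ^ 3 = -Complex.I := by
      rw [pow_succ, Complex.I_sq]; ring
    have hI4 : Complex.I ^ 4 = 1 := by
      rw [pow_succ, hI3]; simp [Complex.I_mul_I]
    have ht0 : ((Real.sqrt 15 : ℝ) : ℂ) ≠ 0 := by
      exact_mod_cast Real.sqrt_ne_zero'.mpr (by norm_num : (0:ℝ) < 15)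
    have hsinv : ((Real.sqrt 3 : ℝ) : ℂ)⁻¹ = ((Real.sqrt 3 : ℝ) : ℂ) / 3 := by
      rw [eq_div_iff (by norm_num : (3:ℂ) ≠ 0)]
      field_simp
      linear_combination -hs2
    set P : Matrix (Fin 4) (Fin 4) ℂ :=
      !![1, 1, 1, 1;
         -1, -1, 1, 1;
         -Complex.I, Complex.I,
           (2*((Real.sqrt 15:ℝ):ℂ)*Complex.I + ((σ:ℝ):ℂ)*((Real.sqrt 3:ℝ):ℂ))/9,
           (-(2*((Real.sqrt 15:ℝ):ℂ)*Complex.I) + ((σ:ℝ):ℂ)*((Real.sqrt 3:ℝ):ℂ))/9;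
         Complex.I, -Complex.I,
           (2*((Real.sqrt 15:ℝ):ℂ)*Complex.I + ((σ:ℝ):ℂ)*((Real.sqrt 3:ℝ):ℂ))/9,
           (-(2*((Real.sqrt 15:ℝ):ℂ)*Complex.I) + ((σ:ℝ):ℂ)*((Real.sqrt 3:ℝ):ℂ))/9] with hP_def
    set d : Fin 4 → ℂ :=
      ![Complex.I/(L:ℂ)^7, -(Complex.I/(L:ℂ)^7),
        Complex.I*((Real.sqrt 15:ℝ):ℂ)/(6*(L:ℂ)^7),
        -(Complex.I*((Real.sqrt 15:ℝ):ℂ)/(6*(L:ℂ)^7))] with hd_def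
    have hPdet : P.det = -(32*((Real.sqrt 15:ℝ):ℂ))/9 := by
      rw [hP_def, det_fin_four']
      simp only [Matrix.cons_val', Matrix.cons_val_zero, Matrix.cons_val_one, Matrix.head_cons,
        Matrix.empty_val', Matrix.cons_val_fin_one, Matrix.head_fin_const, Matrix.cons_val_two,
        Matrix.cons_val_three, Matrix.tail_cons, Matrix.of_apply]
      field_simp
      ring_nf
      simp only [Complex.I_sq, hs2, ht2, hσ2, hs3, ht3, hσ3, hI3, hI4]
      ring
    have hPunit : IsUnit P := by
      rw [Matrix.isUnit_iff_isUnit_det, isUnit_iff_ne_zero, hPdet]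
      simp [ht0]
    have hAP : (A12 L σ).map Complex.ofReal * P = P * Matrix.diagonal d := by
      ext i j
      fin_cases i <;> fin_cases j <;>
      · simp [Matrix.mul_apply, Fin.sum_univ_four, Matrix.map_apply, A12, hP_def, hd_def,
          Matrix.mul_diagonal, Matrix.vecHead, Matrix.vecTail]
        push_cast
        field_simp
        try ring_nf
        try simp only [Complex.I_sq, hs2, ht2, hσ2, hs3, ht3, hσ3, hI3, hI4, inv_pow, hsinv]
        try ring
        try field_simp
        try ring_nf
        try simp only [Complex.I_sq, hs2, ht2, hσ2, hs3, ht3, hσ3, hI3, hI4, inv_pow, hsinv]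
        try ring
    refine ⟨P, d, hPunit, ?_⟩
    have hPP : P * P⁻¹ = 1 := Matrix.mul_nonsing_inv _ (by rw [hPdet]; simp [ht0])
    calc (A12 L σ).map Complex.ofReal
        = (A12 L σ).map Complex.ofReal * (P * P⁻¹) := by rw [hPP, mul_one]
      _ = (A12 L σ).map Complex.ofReal * P * P⁻¹ := by rw [Matrix.mul_assoc]
      _ = P * Matrix.diagonal d * P⁻¹ := by rw [hAP]
  · -- nonsingular
    rw [Matrix.det_eq_sign_charpoly_coeff, A12_charpoly L hL σ hσ]
    simp [Polynomial.coeff_add, Polynomial.coeff_C, Polynomial.coeff_X_pow]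
    positivity
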